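/- arXiv:1809.10505 — 5 statements merged into one kernel-verified Lean document; each statement's English description precedes it below -/
import Mathlib

section
/- For any vector x in R^n and any 1 ≤ K ≤ n, the squared Euclidean norm of the truncation error satisfies ‖x − TopK(x)‖² ≤ ((n−K)/n)·‖x‖². -/
/-- For any vector `x : ℝⁿ` and `1 ≤ K ≤ n`, if `S` is a set of `K` indices carrying the
largest-magnitude components of `x`, then the squared Euclidean norm of the truncation
error satisfies `‖x − TopK(x)‖² ≤ ((n−K)/n)·‖x‖²`. -/
theorem stmt_1 (n K : ℕ) (hK1 : 1 ≤ K) (hKn : K ≤ n) (x : Fin n → ℝ)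
    (S : Finset (Fin n)) (hcard : S.card = K)
    (htop : ∀ i ∈ S, ∀ j ∈ Sᶜ, |x j| ≤ |x i|) :
    ∑ i ∈ Sᶜ, (x i) ^ 2 ≤ (((n : ℝ) - K) / n) * ∑ i, (x i) ^ 2 := by
  have hn : 0 < (n : ℝ) := by
    have : 1 ≤ n := le_trans hK1 hKn
    exact_mod_cast Nat.lt_of_lt_of_le Nat.zero_lt_one this
  have hcc : Sᶜ.card = n - K := by
    simp [Finset.card_compl, hcard]
  have hcast : ((n - K : ℕ) : ℝ) = (n : ℝ) - K := by
    exact Nat.cast_sub hKn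
  have key : (K : ℝ) * ∑ j ∈ Sᶜ, x j ^ 2 ≤ ((n : ℝ) - K) * ∑ i ∈ S, x i ^ 2 := by
    calc (K : ℝ) * ∑ j ∈ Sᶜ, x j ^ 2
        = ∑ _i ∈ S, ∑ j ∈ Sᶜ, x j ^ 2 := by
          rw [Finset.sum_const, hcard, nsmul_eq_mul]
      _ ≤ ∑ i ∈ S, ∑ _j ∈ Sᶜ, x i ^ 2 := by
          refine Finset.sum_le_sum fun i hi => Finset.sum_le_sum fun j hj => ?_
          have h := htop i hi j hj
          calc x j ^ 2 = |x j| ^ 2 := (sq_abs _).symm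
            _ ≤ |x i| ^ 2 := by gcongr
            _ = x i ^ 2 := sq_abs _
      _ = ((n : ℝ) - K) * ∑ i ∈ S, x i ^ 2 := by
          simp [Finset.sum_const, hcc, nsmul_eq_mul, Finset.mul_sum, hcast]
  have htotal : ∑ i ∈ S, x i ^ 2 + ∑ i ∈ Sᶜ, x i ^ 2 = ∑ i, x i ^ 2 :=
    Finset.sum_add_sum_compl S _
  rw [div_mul_eq_mul_div, le_div_iff₀ hn]
  nlinarith [key, htotal, hKn]
end

section
/- For any vector x in R^n and any 1 ≤ K ≤ n, ‖x − TopK(x)‖ ≤ γ‖x‖ where γ = sqrt((n−K)/n). -/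
/-- For any vector `x : ℝⁿ` and `1 ≤ K ≤ n`, if `S` is a set of `K` indices carrying the
largest-magnitude components of `x`, then `‖x − TopK(x)‖ ≤ γ‖x‖` where
`γ = sqrt((n−K)/n)` and `‖·‖` is the Euclidean norm. -/
theorem stmt_2 (n K : ℕ) (hK1 : 1 ≤ K) (hKn : K ≤ n) (x : Fin n → ℝ)
    (S : Finset (Fin n)) (hcard : S.card = K)
    (htop : ∀ i ∈ S, ∀ j ∈ Sᶜ, |x j| ≤ |x i|) :
    Real.sqrt (∑ i ∈ Sᶜ, (x i) ^ 2) ≤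
      Real.sqrt (((n : ℝ) - K) / n) * Real.sqrt (∑ i, (x i) ^ 2) := by
  have hn : 0 < n := lt_of_lt_of_le hK1 hKn
  have hSne : S.Nonempty := Finset.card_pos.mp (by omega)
  obtain ⟨i₀, hi₀S, hi₀⟩ := S.exists_min_image (fun i => (x i) ^ 2) hSne
  have hcardc : Sᶜ.card = n - K := by
    have := Finset.card_compl S
    simp [this, hcard]
  -- ∑_{Sᶜ} x² ≤ (n-K) * x i₀ ²
  have h1 : ∑ i ∈ Sᶜ, (x i) ^ 2 ≤ ((n : ℝ) - K) * (x i₀) ^ 2 := by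
    calc ∑ i ∈ Sᶜ, (x i) ^ 2 ≤ ∑ _i ∈ Sᶜ, (x i₀) ^ 2 := by
          apply Finset.sum_le_sum
          intro j hj
          have := htop i₀ hi₀S j hj
          have := sq_abs (x j) ▸ sq_abs (x i₀) ▸ pow_le_pow_left₀ (abs_nonneg _) this 2
          simpa using this
      _ = ((n : ℝ) - K) * (x i₀) ^ 2 := by
          rw [Finset.sum_const, hcardc, nsmul_eq_mul, Nat.cast_sub hKn]
  -- K * x i₀ ² ≤ ∑_{S} x²
  have h2 : (K : ℝ) * (x i₀) ^ 2 ≤ ∑ i ∈ S, (x i) ^ 2 := by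
    calc (K : ℝ) * (x i₀) ^ 2 = ∑ _i ∈ S, (x i₀) ^ 2 := by
          rw [Finset.sum_const, hcard, nsmul_eq_mul]
      _ ≤ ∑ i ∈ S, (x i) ^ 2 := Finset.sum_le_sum fun i hi => hi₀ i hi
  have hsplit : ∑ i, (x i) ^ 2 = ∑ i ∈ S, (x i) ^ 2 + ∑ i ∈ Sᶜ, (x i) ^ 2 :=
    (Finset.sum_add_sum_compl S _).symm
  have hcnonneg : (0:ℝ) ≤ ∑ i ∈ Sᶜ, (x i) ^ 2 :=
    Finset.sum_nonneg fun i _ => sq_nonneg _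
  have hkey : ∑ i ∈ Sᶜ, (x i) ^ 2 ≤ ((n : ℝ) - K) / n * ∑ i, (x i) ^ 2 := by
    rw [div_mul_eq_mul_div, le_div_iff₀ (by exact_mod_cast hn)]
    have hKpos : (0:ℝ) ≤ (n:ℝ) - K := by
      have : (K:ℝ) ≤ n := by exact_mod_cast hKn
      linarith
    have : (n : ℝ) * ∑ i ∈ Sᶜ, (x i) ^ 2
        = (K : ℝ) * ∑ i ∈ Sᶜ, (x i) ^ 2 + ((n:ℝ) - K) * ∑ i ∈ Sᶜ, (x i) ^ 2 := by ring
    rw [mul_comm (∑ i ∈ Sᶜ, (x i) ^ 2), this, hsplit]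
    have hA : (K : ℝ) * ∑ i ∈ Sᶜ, (x i) ^ 2 ≤ ((n:ℝ) - K) * ∑ i ∈ S, (x i) ^ 2 := by
      calc (K : ℝ) * ∑ i ∈ Sᶜ, (x i) ^ 2 ≤ (K : ℝ) * (((n : ℝ) - K) * (x i₀) ^ 2) :=
            mul_le_mul_of_nonneg_left h1 (by positivity)
        _ = ((n:ℝ) - K) * ((K : ℝ) * (x i₀) ^ 2) := by ring
        _ ≤ ((n:ℝ) - K) * ∑ i ∈ S, (x i) ^ 2 := mul_le_mul_of_nonneg_left h2 hKpos
    nlinarith [hA]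
  calc Real.sqrt (∑ i ∈ Sᶜ, (x i) ^ 2)
      ≤ Real.sqrt (((n : ℝ) - K) / n * ∑ i, (x i) ^ 2) := Real.sqrt_le_sqrt hkey
    _ = Real.sqrt (((n : ℝ) - K) / n) * Real.sqrt (∑ i, (x i) ^ 2) := Real.sqrt_mul (by
          have h1 : (K:ℝ) ≤ n := by exact_mod_cast hKn
          have h2 : (0:ℝ) ≤ n := Nat.cast_nonneg n
          exact div_nonneg (by linarith) h2) _
end

section
/- Fix c with 1/2 < c ≤ 1 and θ > 0, and set γ² = 1 − c and α_t = t^{−θ} for t ≥ 1 (with α_0 = 1). Then there exists a constant D > 0 such that for all t ≥ 1, Σ_{k=1}^{t} (2γ²)^k · α_{t−k}² / α_t ≤ D. -/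
/-- Fix `1/2 < c ≤ 1` and `θ > 0`, set `γ² = 1 − c` and `α_t = t^{−θ}` for `t ≥ 1`
(with `α_0 = 1`). Then there is `D > 0` such that for all `t ≥ 1`,
`Σ_{k=1}^{t} (2γ²)^k · α_{t−k}² / α_t ≤ D`. -/
theorem stmt_9 (c θ : ℝ) (hc1 : 1 / 2 < c) (hc2 : c ≤ 1) (hθ : 0 < θ) :
    ∃ D : ℝ, 0 < D ∧ ∀ t : ℕ, 1 ≤ t →
      (∑ k ∈ Finset.Icc 1 t, (2 * (1 - c)) ^ k *
          ((fun s : ℕ => if s = 0 then (1 : ℝ) else (s : ℝ) ^ (-θ)) (t - k)) ^ 2) /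
        ((t : ℝ) ^ (-θ)) ≤ D := by
  set r : ℝ := 2 * (1 - c) with hrdef
  have hr0 : 0 ≤ r := by simp only [hrdef]; linarith
  have hr1 : r < 1 := by simp only [hrdef]; linarith
  set n := ⌈θ⌉₊ with hn
  have hsum : Summable (fun k : ℕ => ((k : ℝ) + 1) ^ θ * r ^ k) := by
    have h1 : Summable (fun k : ℕ => (2:ℝ)^n * ((k:ℝ)^n * r^k) + (2:ℝ)^n * r^k) :=
      ((summable_pow_mul_geometric_of_norm_lt_one (R := ℝ) n
          (by rwa [Real.norm_eq_abs, abs_of_nonneg hr0])).mul_left _).add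
        ((summable_geometric_of_lt_one hr0 hr1).mul_left _)
    refine h1.of_nonneg_of_le (fun k => mul_nonneg (Real.rpow_nonneg (by positivity) _) (pow_nonneg hr0 k)) (fun k => ?_)
    have hk1 : (1:ℝ) ≤ (k:ℝ) + 1 := le_add_of_nonneg_left (Nat.cast_nonneg k)
    have h2 : ((k:ℝ)+1)^θ ≤ ((k:ℝ)+1)^(n:ℝ) :=
      Real.rpow_le_rpow_of_exponent_le hk1 (Nat.le_ceil θ)
    have h3 : ((k:ℝ)+1)^(n:ℝ) = ((k:ℝ)+1)^n := Real.rpow_natCast _ n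
    have h4 : ((k:ℝ)+1)^n ≤ 2^n * (k:ℝ)^n + 2^n := by
      rcases Nat.eq_zero_or_pos k with h | h
      · simp only [h, Nat.cast_zero, zero_add, one_pow]
        have : (0:ℝ) ≤ 2^n * (0:ℝ)^n := by positivity
        have h2n : (1:ℝ) ≤ 2^n := one_le_pow₀ (by norm_num)
        linarith
      · have hk : (1:ℝ) ≤ (k:ℝ) := by exact_mod_cast h
        calc ((k:ℝ)+1)^n ≤ (2*(k:ℝ))^n := by
              apply pow_le_pow_left₀ (by positivity) (by linarith)
          _ = 2^n * (k:ℝ)^n := mul_pow 2 _ n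
          _ ≤ 2^n * (k:ℝ)^n + 2^n := le_add_of_nonneg_right (by positivity)
    have hrk : (0:ℝ) ≤ r^k := pow_nonneg hr0 k
    calc ((k:ℝ)+1)^θ * r^k ≤ (2^n * (k:ℝ)^n + 2^n) * r^k := by
          apply mul_le_mul_of_nonneg_right _ hrk
          calc ((k:ℝ)+1)^θ ≤ ((k:ℝ)+1)^(n:ℝ) := h2
            _ = ((k:ℝ)+1)^n := h3
            _ ≤ 2^n * (k:ℝ)^n + 2^n := h4
      _ = 2^n * ((k:ℝ)^n * r^k) + 2^n * r^k := by ring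
  have htsum0 : 0 ≤ ∑' k : ℕ, ((k : ℝ) + 1) ^ θ * r ^ k :=
    tsum_nonneg (fun k => mul_nonneg (Real.rpow_nonneg (by positivity) _) (pow_nonneg hr0 k))
  refine ⟨(∑' k : ℕ, ((k : ℝ) + 1) ^ θ * r ^ k) + 1, by linarith, ?_⟩
  intro t ht
  have htR : (1:ℝ) ≤ (t:ℝ) := by exact_mod_cast ht
  have htpos : (0:ℝ) < (t:ℝ) := by linarith
  have htneg : (0:ℝ) < (t:ℝ) ^ (-θ) := Real.rpow_pos_of_pos htpos _
  rw [div_le_iff₀ htneg]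
  have key : ∀ k ∈ Finset.Icc 1 t,
      r ^ k * ((if t - k = 0 then (1:ℝ) else ((t - k : ℕ) : ℝ) ^ (-θ))) ^ 2 ≤
        (((k:ℝ) + 1) ^ θ * r ^ k) * (t:ℝ) ^ (-θ) := by
    intro k hk
    obtain ⟨hk1, hkt⟩ := Finset.mem_Icc.mp hk
    have hrk : (0:ℝ) ≤ r^k := pow_nonneg hr0 k
    by_cases h0 : t - k = 0
    · rw [if_pos h0, one_pow, mul_one]
      have hkt' : t = k := le_antisymm (Nat.sub_eq_zero_iff_le.mp h0) hkt
      have hle : (t:ℝ) ≤ (k:ℝ) + 1 := by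
        rw [hkt']; linarith
      have h1 : (t:ℝ)^θ ≤ ((k:ℝ)+1)^θ :=
        Real.rpow_le_rpow (by linarith) hle (le_of_lt hθ)
      have h2 : (1:ℝ) ≤ ((k:ℝ)+1)^θ * (t:ℝ)^(-θ) := by
        rw [Real.rpow_neg (le_of_lt htpos), ← div_eq_mul_inv, le_div_iff₀ (Real.rpow_pos_of_pos htpos θ)]
        linarith
      calc r^k = r^k * 1 := (mul_one _).symm
        _ ≤ r^k * (((k:ℝ)+1)^θ * (t:ℝ)^(-θ)) := by
            apply mul_le_mul_of_nonneg_left h2 hrk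
        _ = (((k:ℝ)+1)^θ * r^k) * (t:ℝ)^(-θ) := by ring
    · simp only [if_neg h0]
      have hm1 : 1 ≤ t - k := Nat.one_le_iff_ne_zero.mpr h0
      set m : ℝ := ((t - k : ℕ) : ℝ) with hm
      have hmR : (1:ℝ) ≤ m := by rw [hm]; exact_mod_cast hm1
      have hmpos : (0:ℝ) < m := by linarith
      have hm0 : m ^ (-θ) ≤ 1 :=
        Real.rpow_le_one_of_one_le_of_nonpos hmR (by linarith)
      have hmneg : (0:ℝ) < m ^ (-θ) := Real.rpow_pos_of_pos hmpos _
      have hsq : (m ^ (-θ))^2 ≤ m ^ (-θ) := by nlinarith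
      have hcastm : m = (t:ℝ) - (k:ℝ) := by
        rw [hm]; exact Nat.cast_sub hkt
      have hkR : (0:ℝ) ≤ (k:ℝ) := Nat.cast_nonneg k
      have htm : (t:ℝ) ≤ ((k:ℝ)+1) * m := by nlinarith [hcastm]
      have h1 : (t:ℝ)^θ ≤ ((k:ℝ)+1)^θ * m^θ := by
        calc (t:ℝ)^θ ≤ (((k:ℝ)+1)*m)^θ :=
              Real.rpow_le_rpow (by linarith) htm (le_of_lt hθ)
          _ = ((k:ℝ)+1)^θ * m^θ := Real.mul_rpow (by positivity) (by linarith)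
      have h2 : m^(-θ) ≤ ((k:ℝ)+1)^θ * (t:ℝ)^(-θ) := by
        rw [Real.rpow_neg (le_of_lt hmpos), Real.rpow_neg (le_of_lt htpos),
          ← div_eq_mul_inv, le_div_iff₀ (Real.rpow_pos_of_pos htpos θ),
          inv_mul_le_iff₀ (Real.rpow_pos_of_pos hmpos θ)]
        linarith
      calc r^k * (m^(-θ))^2 ≤ r^k * (((k:ℝ)+1)^θ * (t:ℝ)^(-θ)) := by
            apply mul_le_mul_of_nonneg_left _ hrk
            exact le_trans hsq h2
        _ = (((k:ℝ)+1)^θ * r^k) * (t:ℝ)^(-θ) := by ring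
  calc (∑ k ∈ Finset.Icc 1 t, r ^ k *
          ((fun s : ℕ => if s = 0 then (1 : ℝ) else (s : ℝ) ^ (-θ)) (t - k)) ^ 2)
      ≤ ∑ k ∈ Finset.Icc 1 t, (((k:ℝ) + 1) ^ θ * r ^ k) * (t:ℝ) ^ (-θ) :=
        Finset.sum_le_sum key
    _ = (∑ k ∈ Finset.Icc 1 t, ((k:ℝ) + 1) ^ θ * r ^ k) * (t:ℝ) ^ (-θ) := by
        rw [Finset.sum_mul]
    _ ≤ ((∑' k : ℕ, ((k : ℝ) + 1) ^ θ * r ^ k) + 1) * (t:ℝ) ^ (-θ) := by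
        apply mul_le_mul_of_nonneg_right _ (le_of_lt htneg)
        have := Summable.sum_le_tsum (Finset.Icc 1 t) (fun k _ => mul_nonneg (Real.rpow_nonneg (by positivity) _) (pow_nonneg hr0 k)) hsum
        linarith
end

section
/- Let 0 < q < 1 and θ > 0. Then sup over t ≥ 1 of Σ_{k=1}^{t−1} q^k · t^{2θ}/(t−k)^{2θ} is finite. -/
/-- For `0 < q < 1` and `θ > 0`, the quantity
`Σ_{k=1}^{t−1} q^k · t^{2θ}/(t−k)^{2θ}` is uniformly bounded over `t ≥ 1`. -/
theorem stmt_10 (q θ : ℝ) (hq0 : 0 < q) (hq1 : q < 1) (hθ : 0 < θ) :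
    ∃ D : ℝ, ∀ t : ℕ, 1 ≤ t →
      ∑ k ∈ Finset.Icc 1 (t - 1), q ^ k * (t : ℝ) ^ (2 * θ) / ((t - k : ℕ) : ℝ) ^ (2 * θ)
        ≤ D := by
  obtain ⟨n, hn⟩ := exists_nat_ge (2 * θ)
  have hsum : Summable (fun k : ℕ => ((k : ℝ) + 1) ^ n * q ^ k) := by
    have h1 : Summable (fun k : ℕ => (k : ℝ) ^ n * q ^ k) :=
      summable_pow_mul_geometric_of_norm_lt_one n
        (by rw [Real.norm_eq_abs, abs_of_pos hq0]; exact hq1)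
    have h2 := (summable_nat_add_iff 1).mpr h1
    have h3 := h2.mul_left q⁻¹
    refine h3.congr fun k => ?_
    push_cast
    rw [pow_succ]
    field_simp
  refine ⟨∑' k : ℕ, ((k : ℝ) + 1) ^ n * q ^ k, ?_⟩
  intro t ht
  have hstep : ∑ k ∈ Finset.Icc 1 (t - 1), q ^ k * (t : ℝ) ^ (2 * θ) / ((t - k : ℕ) : ℝ) ^ (2 * θ)
      ≤ ∑ k ∈ Finset.Icc 1 (t - 1), ((k : ℝ) + 1) ^ n * q ^ k := by
    apply Finset.sum_le_sum
    intro k hk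
    simp only [Finset.mem_Icc] at hk
    obtain ⟨hk1, hk2⟩ := hk
    set m := t - k with hm
    have hm1 : 1 ≤ m := by omega
    have hnat : t ≤ (k + 1) * m := by
      have htm : t = k + m := by omega
      calc t = k + m := htm
        _ ≤ k * m + m := by nlinarith
        _ = (k + 1) * m := by ring
    have hmR : (1 : ℝ) ≤ (m : ℝ) := by exact_mod_cast hm1
    have hdiv : (t : ℝ) / (m : ℝ) ≤ (k : ℝ) + 1 := by
      rw [div_le_iff₀ (by linarith)]
      calc (t : ℝ) ≤ (((k + 1) * m : ℕ) : ℝ) := by exact_mod_cast hnat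
        _ = ((k : ℝ) + 1) * (m : ℝ) := by push_cast; ring
    have h1 : (t : ℝ) ^ (2 * θ) / (m : ℝ) ^ (2 * θ) = ((t : ℝ) / (m : ℝ)) ^ (2 * θ) := by
      rw [Real.div_rpow (by positivity) (by positivity)]
    have h2 : ((t : ℝ) / (m : ℝ)) ^ (2 * θ) ≤ ((k : ℝ) + 1) ^ (2 * θ) :=
      Real.rpow_le_rpow (by positivity) hdiv (by linarith)
    have h3 : ((k : ℝ) + 1) ^ (2 * θ) ≤ ((k : ℝ) + 1) ^ (n : ℝ) :=
      Real.rpow_le_rpow_of_exponent_le (by simp [Nat.cast_nonneg]) hn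
    have h4 : ((k : ℝ) + 1) ^ (n : ℝ) = ((k : ℝ) + 1) ^ n := Real.rpow_natCast _ n
    have hq : (0 : ℝ) ≤ q ^ k := by positivity
    rw [mul_div_assoc, h1, mul_comm]
    exact mul_le_mul_of_nonneg_right (h2.trans (h3.trans_eq h4)) hq
  exact hstep.trans (Summable.sum_le_tsum _ (fun k _ => by positivity) hsum)
end

section
/- Suppose a nonnegative sequence e_t satisfies e_t² ≤ c²·Σ_{k=1}^{t} q^k · β_{t−k+1} where 0 < q < 1, c > 0, and β_s ≤ M²·α_{s−1}² for a positive nonincreasing sequence (α_s) satisfying Σ_{k=1}^t q^k α_{t−k}²/α_t ≤ D for all t. Then e_t² ≤ c²·M²·D·α_t for all t ≥ 1. -/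
/-- If a nonnegative sequence `e_t` satisfies
`e_t² ≤ c²·Σ_{k=1}^{t} q^k · β_{t−k+1}` with `0 < q < 1`, `c > 0`, where
`β_s ≤ M²·α_{s−1}²` for a positive nonincreasing sequence `α` satisfying
`Σ_{k=1}^t q^k α_{t−k}²/α_t ≤ D` for all `t ≥ 1`, then `e_t² ≤ c²·M²·D·α_t`. -/
theorem stmt_17 (q c M D : ℝ) (hq0 : 0 < q) (hq1 : q < 1) (hc : 0 < c) (hM : 0 < M)
    (e β α : ℕ → ℝ) (he : ∀ t, 0 ≤ e t)
    (hα_pos : ∀ s, 0 < α s) (hα_anti : Antitone α)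
    (hβ : ∀ s, 1 ≤ s → β s ≤ M ^ 2 * (α (s - 1)) ^ 2)
    (hrec : ∀ t, 1 ≤ t → (e t) ^ 2 ≤ c ^ 2 * ∑ k ∈ Finset.Icc 1 t, q ^ k * β (t - k + 1))
    (hD : ∀ t, 1 ≤ t → ∑ k ∈ Finset.Icc 1 t, q ^ k * (α (t - k)) ^ 2 / α t ≤ D) :
    ∀ t, 1 ≤ t → (e t) ^ 2 ≤ c ^ 2 * M ^ 2 * D * α t := by
  intro t ht
  have h1 : ∑ k ∈ Finset.Icc 1 t, q ^ k * β (t - k + 1)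
      ≤ ∑ k ∈ Finset.Icc 1 t, q ^ k * (M ^ 2 * (α (t - k)) ^ 2) := by
    apply Finset.sum_le_sum
    intro k hk
    simp only [Finset.mem_Icc] at hk
    have hβk := hβ (t - k + 1) (by omega)
    have : t - k + 1 - 1 = t - k := by omega
    rw [this] at hβk
    exact mul_le_mul_of_nonneg_left hβk (by positivity)
  have h2 : ∑ k ∈ Finset.Icc 1 t, q ^ k * (M ^ 2 * (α (t - k)) ^ 2)
      = M ^ 2 * α t * ∑ k ∈ Finset.Icc 1 t, q ^ k * (α (t - k)) ^ 2 / α t := by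
    rw [Finset.mul_sum]
    apply Finset.sum_congr rfl
    intro k _
    field_simp [(hα_pos t).ne']
  have h3 : ∑ k ∈ Finset.Icc 1 t, q ^ k * (α (t - k)) ^ 2 / α t ≤ D := hD t ht
  calc (e t) ^ 2 ≤ c ^ 2 * ∑ k ∈ Finset.Icc 1 t, q ^ k * β (t - k + 1) := hrec t ht
    _ ≤ c ^ 2 * (M ^ 2 * α t * ∑ k ∈ Finset.Icc 1 t, q ^ k * (α (t - k)) ^ 2 / α t) := by
        rw [← h2]; exact mul_le_mul_of_nonneg_left h1 (by positivity)
    _ ≤ c ^ 2 * (M ^ 2 * α t * D) := by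
        apply mul_le_mul_of_nonneg_left _ (by positivity)
        exact mul_le_mul_of_nonneg_left h3 (by have := hα_pos t; positivity)
    _ = c ^ 2 * M ^ 2 * D * α t := by ring
end
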